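/- Let $k$ be an algebraically closed field of characteristic $0$ and let $q_0, q_1 \in k[X_0,X_1,X_2]$ be two linearly independent homogeneous quadratic forms. Suppose that every nonzero form in the pencil $k q_0 + k q_1$ factors as a product of two linear forms. Then either $q_0$ and $q_1$ have a common linear factor, or there exists a point $p \in \mathbb{P}^2$ at which all partial derivatives of both $q_0$ and $q_1$ vanish (a common singular point of the two conics). -/

import Mathlib

open MvPolynomial Matrix

set_option linter.unusedSectionVars false

namespace PencilAux
variable {k : Type*} [Field k] [CharZero k]

/-- The linear form with coefficient vector `u`. -/
noncomputable def lin (u : Fin 3 → k) : MvPolynomial (Fin 3) k :=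
  C (u 0) * X 0 + C (u 1) * X 1 + C (u 2) * X 2

/-- Dot product of two vectors in `k³`. -/
def dot3 (u v : Fin 3 → k) : k := u 0 * v 0 + u 1 * v 1 + u 2 * v 2

/-- (Twice) the symmetric matrix associated to the quadratic form `lin u * lin v`. -/
def S (u v : Fin 3 → k) : Matrix (Fin 3) (Fin 3) k :=
  Matrix.of fun i j => u i * v j + u j * v i

/-- Cross product in `k³`. -/
def cross3 (u v : Fin 3 → k) : Fin 3 → k :=
  ![u 1 * v 2 - u 2 * v 1, u 2 * v 0 - u 0 * v 2, u 0 * v 1 - u 1 * v 0]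

/-- Standard basis vectors. -/
def E (i : Fin 3) : Fin 3 → k := fun j => if j = i then 1 else 0

lemma eval_lin (x u : Fin 3 → k) : eval x (lin u) = dot3 u x := by
  simp [lin, dot3]

lemma lin_smul (c : k) (u : Fin 3 → k) : lin (c • u) = C c * lin u := by
  simp [lin]; ring

lemma isHomog_lin (u : Fin 3 → k) : (lin u).IsHomogeneous 1 := by
  unfold lin
  exact (((isHomogeneous_X k 0).C_mul _).add (((isHomogeneous_X k 1).C_mul _))).add
    ((isHomogeneous_X k 2).C_mul _)

lemma lin_ne_zero {u : Fin 3 → k} (hu : u ≠ 0) : lin u ≠ 0 := by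
  intro h
  apply hu
  funext i
  fin_cases i
  · have := congrArg (eval (![1,0,0] : Fin 3 → k)) h
    simpa [eval_lin, dot3] using this
  · have := congrArg (eval (![0,1,0] : Fin 3 → k)) h
    simpa [eval_lin, dot3] using this
  · have := congrArg (eval (![0,0,1] : Fin 3 → k)) h
    simpa [eval_lin, dot3] using this

lemma sing_of_dots {u v a : Fin 3 → k} (h1 : dot3 u a = 0) (h2 : dot3 v a = 0) (i : Fin 3) :
    eval a (pderiv i (lin u * lin v)) = 0 := by
  rw [pderiv_mul]
  simp [eval_lin, h1, h2]

lemma dot3_cross_left (u v : Fin 3 → k) : dot3 u (cross3 u v) = 0 := by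
  simp [dot3, cross3]; ring

lemma dot3_cross_right (u v : Fin 3 → k) : dot3 v (cross3 u v) = 0 := by
  simp [dot3, cross3]; ring

lemma dot3_smul_left (c : k) (u v : Fin 3 → k) : dot3 (c • u) v = c * dot3 u v := by
  simp [dot3]; ring

/-- If the cross product vanishes and `u ≠ 0`, then `v` is a multiple of `u`. -/
lemma cross3_ne_zero_aux {u v : Fin 3 → k} (h : cross3 u v = 0) (hu : u ≠ 0) :
    ∃ c : k, v = c • u := by
  have h0 := congrFun h 0
  have h1 := congrFun h 1
  have h2 := congrFun h 2
  simp [cross3] at h0 h1 h2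
  have hex : u 0 ≠ 0 ∨ u 1 ≠ 0 ∨ u 2 ≠ 0 := by
    by_contra hc
    push_neg at hc
    apply hu; funext i; fin_cases i <;> simp [hc.1, hc.2.1, hc.2.2]
  rcases hex with h' | h' | h'
  · refine ⟨v 0 / u 0, ?_⟩
    funext i; fin_cases i <;> simp <;> rw [div_mul_eq_mul_div, eq_div_iff h'] <;>
      first
        | linear_combination h0 | linear_combination -h0
        | linear_combination h1 | linear_combination -h1
        | linear_combination h2 | linear_combination -h2 | ring
  · refine ⟨v 1 / u 1, ?_⟩
    funext i; fin_cases i <;> simp <;> rw [div_mul_eq_mul_div, eq_div_iff h'] <;>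
      first
        | linear_combination h0 | linear_combination -h0
        | linear_combination h1 | linear_combination -h1
        | linear_combination h2 | linear_combination -h2 | ring
  · refine ⟨v 2 / u 2, ?_⟩
    funext i; fin_cases i <;> simp <;> rw [div_mul_eq_mul_div, eq_div_iff h'] <;>
      first
        | linear_combination h0 | linear_combination -h0
        | linear_combination h1 | linear_combination -h1
        | linear_combination h2 | linear_combination -h2 | ring

/-- Linearly dependent vectors have vanishing cross product. -/
lemma cross3_of_dep {u v : Fin 3 → k} {a b : k} (hab : ¬(a = 0 ∧ b = 0))
    (h : a • u + b • v = 0) : cross3 u v = 0 := by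
  have h0 := congrFun h 0
  have h1 := congrFun h 1
  have h2 := congrFun h 2
  simp at h0 h1 h2
  rcases (by tauto : a ≠ 0 ∨ b ≠ 0) with ha | hb
  · have e0 : u 0 = -(b/a) * v 0 := by field_simp; linear_combination h0
    have e1 : u 1 = -(b/a) * v 1 := by field_simp; linear_combination h1
    have e2 : u 2 = -(b/a) * v 2 := by field_simp; linear_combination h2
    funext i; fin_cases i <;> simp [cross3, e0, e1, e2] <;> ring
  · have e0 : v 0 = -(a/b) * u 0 := by field_simp; linear_combination h0
    have e1 : v 1 = -(a/b) * u 1 := by field_simp; linear_combination h1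
    have e2 : v 2 = -(a/b) * u 2 := by field_simp; linear_combination h2
    funext i; fin_cases i <;> simp [cross3, e0, e1, e2] <;> ring

lemma dot3_E (u : Fin 3 → k) (i : Fin 3) : dot3 u (E i) = u i := by
  fin_cases i <;> simp [dot3, E]

lemma dot3_add_right (u x y : Fin 3 → k) : dot3 u (x + y) = dot3 u x + dot3 u y := by
  simp [dot3]; ring

/-- Recover the symmetric matrix identity from an identity of quadratic forms
as functions. -/
lemma extract {c₀ c₁ : k} {l₁ l₂ m₁ m₂ a b : Fin 3 → k}
    (hQ : ∀ x : Fin 3 → k,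
      c₀ * (dot3 l₁ x * dot3 l₂ x) + c₁ * (dot3 m₁ x * dot3 m₂ x) = dot3 a x * dot3 b x) :
    c₀ • S l₁ l₂ + c₁ • S m₁ m₂ = S a b := by
  ext i j
  have hij := hQ (E i + E j)
  have hi := hQ (E i)
  have hj := hQ (E j)
  simp only [dot3_add_right, dot3_E] at hij hi hj
  simp only [Matrix.add_apply, Matrix.smul_apply, S, Matrix.of_apply, smul_eq_mul]
  linear_combination hij - hi - hj

lemma Ssymm (u v : Fin 3 → k) : S u v = S v u := by
  ext i j; simp [S]; ring

lemma detS (u v : Fin 3 → k) : det (S u v) = 0 := by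
  simp [S, det_fin_three]; ring

lemma Sconj (P : Matrix (Fin 3) (Fin 3) k) (u v : Fin 3 → k) :
    S (P *ᵥ u) (P *ᵥ v) = P * S u v * Pᵀ := by
  ext i j
  simp [S, Matrix.mul_apply, Matrix.mulVec, dotProduct, Fin.sum_univ_three,
    Matrix.transpose_apply]
  ring

lemma degree_three (d : Fin 3 →₀ ℕ) : d.degree = d 0 + d 1 + d 2 := by
  rw [Finsupp.degree_apply, Finset.sum_subset (Finset.subset_univ _)
    (fun i _ h => Finsupp.notMem_support_iff.mp h), Fin.sum_univ_three]

lemma single_ne {i j : Fin 3} (h : i ≠ j) :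
    Finsupp.single i (1 : ℕ) ≠ Finsupp.single j 1 := by
  simp [Finsupp.single_eq_single_iff, h]

/-- Every homogeneous linear polynomial in three variables is `lin u` for some `u`. -/
lemma homog1 {l : MvPolynomial (Fin 3) k} (hl : l.IsHomogeneous 1) :
    ∃ u : Fin 3 → k, l = lin u := by
  refine ⟨fun i => coeff (Finsupp.single i 1) l, ?_⟩
  apply MvPolynomial.ext
  intro d
  have hcoeff : coeff d (lin (fun i => coeff (Finsupp.single i 1) l))
      = (if Finsupp.single (0 : Fin 3) 1 = d then coeff (Finsupp.single (0 : Fin 3) 1) l else 0)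
      + (if Finsupp.single (1 : Fin 3) 1 = d then coeff (Finsupp.single (1 : Fin 3) 1) l else 0)
      + (if Finsupp.single (2 : Fin 3) 1 = d then coeff (Finsupp.single (2 : Fin 3) 1) l else 0) := by
    simp [lin, coeff_X', mul_ite]
  rw [hcoeff]
  by_cases h1 : d.degree = 1
  · have h3 := degree_three d
    rw [h1] at h3
    have hcases : (d 0 = 1 ∧ d 1 = 0 ∧ d 2 = 0) ∨ (d 0 = 0 ∧ d 1 = 1 ∧ d 2 = 0)
        ∨ (d 0 = 0 ∧ d 1 = 0 ∧ d 2 = 1) := by omega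
    rcases hcases with ⟨e0, e1, e2⟩ | ⟨e0, e1, e2⟩ | ⟨e0, e1, e2⟩
    · have hd : d = Finsupp.single (0 : Fin 3) 1 := by
        ext t; fin_cases t <;> simp [Finsupp.single_apply, e0, e1, e2]
      subst hd
      rw [if_pos rfl, if_neg (single_ne (by decide)), if_neg (single_ne (by decide))]
      simp
    · have hd : d = Finsupp.single (1 : Fin 3) 1 := by
        ext t; fin_cases t <;> simp [Finsupp.single_apply, e0, e1, e2]
      subst hd
      rw [if_neg (single_ne (by decide)), if_pos rfl, if_neg (single_ne (by decide))]
      simp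
    · have hd : d = Finsupp.single (2 : Fin 3) 1 := by
        ext t; fin_cases t <;> simp [Finsupp.single_apply, e0, e1, e2]
      subst hd
      rw [if_neg (single_ne (by decide)), if_neg (single_ne (by decide)), if_pos rfl]
      simp
  · have hzero : coeff d l = 0 := hl.coeff_eq_zero h1
    have hne : ∀ i : Fin 3, Finsupp.single i (1 : ℕ) ≠ d := by
      intro i h
      apply h1
      rw [← h, degree_three]
      fin_cases i <;> simp [Finsupp.single_apply]
    rw [hzero, if_neg (hne 0), if_neg (hne 1), if_neg (hne 2)]
    simp

/-- The key computation: if `u, v, w` form a basis and the whole pencil spanned by the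
symmetric matrices of `(lin u)(lin v)` and `(lin w)(lin z)` has vanishing determinant,
then `z` is a multiple of `u` or of `v`. -/
lemma main {u v w z : Fin 3 → k}
    (hN : (Matrix.of ![u, v, w]).det ≠ 0)
    (hdet : ∀ x y : k, det (x • S u v + y • S w z) = 0) :
    (∃ c : k, z = c • u) ∨ (∃ c : k, z = c • v) := by
  set N : Matrix (Fin 3) (Fin 3) k := Matrix.of ![u, v, w] with hNdef
  have hdT : IsUnit (Nᵀ).det := by
    rw [Matrix.det_transpose]; exact isUnit_iff_ne_zero.2 hN
  set P : Matrix (Fin 3) (Fin 3) k := (Nᵀ)⁻¹ with hPdef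
  have hPN : P * Nᵀ = 1 := Matrix.nonsing_inv_mul _ hdT
  have hNP : Nᵀ * P = 1 := Matrix.mul_nonsing_inv _ hdT
  have hu : P *ᵥ u = E 0 := by
    have h : Nᵀ *ᵥ (E 0 : Fin 3 → k) = u := by
      funext i; fin_cases i <;>
        simp [Matrix.mulVec, dotProduct, Fin.sum_univ_three, E, hNdef,
          Matrix.transpose_apply]
    rw [← h, Matrix.mulVec_mulVec, hPN, Matrix.one_mulVec]
  have hv : P *ᵥ v = E 1 := by
    have h : Nᵀ *ᵥ (E 1 : Fin 3 → k) = v := by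
      funext i; fin_cases i <;>
        simp [Matrix.mulVec, dotProduct, Fin.sum_univ_three, E, hNdef,
          Matrix.transpose_apply]
    rw [← h, Matrix.mulVec_mulVec, hPN, Matrix.one_mulVec]
  have hw : P *ᵥ w = E 2 := by
    have h : Nᵀ *ᵥ (E 2 : Fin 3 → k) = w := by
      funext i; fin_cases i <;>
        simp [Matrix.mulVec, dotProduct, Fin.sum_univ_three, E, hNdef,
          Matrix.transpose_apply]
    rw [← h, Matrix.mulVec_mulVec, hPN, Matrix.one_mulVec]
  set b : Fin 3 → k := P *ᵥ z with hbdef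
  have hz : z = b 0 • u + b 1 • v + b 2 • w := by
    have h1 : Nᵀ *ᵥ b = z := by
      rw [hbdef, Matrix.mulVec_mulVec, hNP, Matrix.one_mulVec]
    rw [← h1]
    funext i; fin_cases i <;>
      simp [Matrix.mulVec, dotProduct, Fin.sum_univ_three, hNdef,
        Matrix.transpose_apply] <;> ring
  have key : ∀ x y : k, det (x • S (E 0) (E 1) + y • S (E 2) b) = 0 := by
    intro x y
    rw [← hu, ← hv, ← hw, hbdef, Sconj, Sconj]
    have hh : x • (P * S u v * Pᵀ) + y • (P * S w z * Pᵀ)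
        = P * (x • S u v + y • S w z) * Pᵀ := by
      simp only [Matrix.mul_add, Matrix.add_mul, Matrix.mul_smul, Matrix.smul_mul]
    rw [hh, Matrix.det_mul, Matrix.det_mul, hdet, mul_zero, zero_mul]
  have h11 := key 1 1
  have h1m := key 1 (-1)
  have expand : ∀ x y : k, det (x • S (E 0) (E 1) + y • S (E 2) b)
      = -2*x^2*y*(b 2) + 2*x*y^2*(b 0 * b 1) := by
    intro x y
    rw [det_fin_three]
    simp (config := { decide := true }) only [Matrix.add_apply, Matrix.smul_apply, S,
      Matrix.of_apply, E, smul_eq_mul, if_true, if_false]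
    ring
  rw [expand] at h11 h1m
  have hb2 : b 2 = 0 := by linear_combination (h1m - h11) / 4
  have hb01 : b 0 * b 1 = 0 := by linear_combination (h11 + h1m) / 4
  rcases mul_eq_zero.1 hb01 with h0 | h1
  · right
    refine ⟨b 1, ?_⟩
    rw [hz, h0, hb2]; funext i; simp
  · left
    refine ⟨b 0, ?_⟩
    rw [hz, h1, hb2]; funext i; simp

/-- Rows of a singular 3×3 matrix are linearly dependent. -/
lemma rows_dep {u v w : Fin 3 → k} (h : (Matrix.of ![u, v, w]).det = 0) :
    ∃ x : Fin 3 → k, x ≠ 0 ∧ x 0 • u + x 1 • v + x 2 • w = 0 := by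
  obtain ⟨x, hx0, hx⟩ := (Matrix.exists_vecMul_eq_zero_iff).2 h
  refine ⟨x, hx0, ?_⟩
  funext j
  have := congrFun hx j
  simp [Matrix.vecMul, dotProduct, Fin.sum_univ_three] at this
  fin_cases j <;> simpa using this

lemma dot3_comb {x0 x1 x2 : k} {u v w t : Fin 3 → k}
    (h : x0 • u + x1 • v + x2 • w = 0) (hu : dot3 u t = 0) (hv : dot3 v t = 0)
    (hx2 : x2 ≠ 0) : dot3 w t = 0 := by
  have h0 := congrFun h 0
  have h1 := congrFun h 1
  have h2 := congrFun h 2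
  simp at h0 h1 h2
  have : x0 * dot3 u t + x1 * dot3 v t + x2 * dot3 w t = 0 := by
    simp only [dot3]
    linear_combination t 0 * h0 + t 1 * h1 + t 2 * h2
  rw [hu, hv] at this
  have h' : x2 * dot3 w t = 0 := by linear_combination this
  exact (mul_eq_zero.1 h').resolve_left hx2

/-- If `a = c • b` with `a ≠ 0`, then `b` is a multiple of `a`. -/
lemma inv_prop {aV bV : Fin 3 → k} {c : k} (ha : aV ≠ 0) (h : aV = c • bV) :
    ∃ d : k, bV = d • aV := by
  have hc : c ≠ 0 := by rintro rfl; rw [zero_smul] at h; exact ha h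
  exact ⟨c⁻¹, by rw [h, smul_smul, inv_mul_cancel₀ hc, one_smul]⟩

lemma lin_zero : lin (0 : Fin 3 → k) = 0 := by simp [lin]

end PencilAux

open PencilAux

/-- A pencil of plane conics consisting entirely of singular members either has a
common linear factor or a common singular point. -/
theorem pencil_of_singular_conics {k : Type*} [Field k] [IsAlgClosed k] [CharZero k]
    (q₀ q₁ : MvPolynomial (Fin 3) k)
    (hq₀ : q₀.IsHomogeneous 2) (hq₁ : q₁.IsHomogeneous 2)
    (hind : LinearIndependent k ![q₀, q₁])
    (hsing : ∀ c₀ c₁ : k, (c₀, c₁) ≠ (0, 0) →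
      ∃ l m : MvPolynomial (Fin 3) k, l.IsHomogeneous 1 ∧ m.IsHomogeneous 1 ∧
        c₀ • q₀ + c₁ • q₁ = l * m) :
    (∃ l : MvPolynomial (Fin 3) k, l.IsHomogeneous 1 ∧ l ≠ 0 ∧ l ∣ q₀ ∧ l ∣ q₁) ∨
      (∃ a : Fin 3 → k, a ≠ 0 ∧
        (∀ i, eval a (pderiv i q₀) = 0) ∧ (∀ i, eval a (pderiv i q₁) = 0)) := by
  obtain ⟨l0, m0, hl0, hm0, he0⟩ := hsing 1 0 (by simp)
  obtain ⟨l1, m1, hl1, hm1, he1⟩ := hsing 0 1 (by simp)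
  rw [one_smul, zero_smul, add_zero] at he0
  rw [zero_smul, one_smul, zero_add] at he1
  obtain ⟨lam1, hlam1⟩ := homog1 hl0
  obtain ⟨lam2, hlam2⟩ := homog1 hm0
  obtain ⟨mu1, hmu1⟩ := homog1 hl1
  obtain ⟨mu2, hmu2⟩ := homog1 hm1
  have hq0f : q₀ = lin lam1 * lin lam2 := by rw [he0, hlam1, hlam2]
  have hq1f : q₁ = lin mu1 * lin mu2 := by rw [he1, hmu1, hmu2]
  have hq0ne : q₀ ≠ 0 := by
    have := hind.ne_zero 0; simpa using this
  have hq1ne : q₁ ≠ 0 := by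
    have := hind.ne_zero 1; simpa using this
  have hlam1ne : lam1 ≠ 0 := fun h => hq0ne (by rw [hq0f, h, lin_zero, zero_mul])
  have hlam2ne : lam2 ≠ 0 := fun h => hq0ne (by rw [hq0f, h, lin_zero, mul_zero])
  have hmu1ne : mu1 ≠ 0 := fun h => hq1ne (by rw [hq1f, h, lin_zero, zero_mul])
  have hmu2ne : mu2 ≠ 0 := fun h => hq1ne (by rw [hq1f, h, lin_zero, mul_zero])
  by_cases hprop : (∃ c : k, mu1 = c • lam1) ∨ (∃ c : k, mu1 = c • lam2) ∨
      (∃ c : k, mu2 = c • lam1) ∨ (∃ c : k, mu2 = c • lam2)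
  · left
    rcases hprop with ⟨c, hc⟩ | ⟨c, hc⟩ | ⟨c, hc⟩ | ⟨c, hc⟩
    · exact ⟨lin lam1, isHomog_lin _, lin_ne_zero hlam1ne, ⟨lin lam2, hq0f⟩,
        ⟨C c * lin mu2, by rw [hq1f, hc, lin_smul]; ring⟩⟩
    · exact ⟨lin lam2, isHomog_lin _, lin_ne_zero hlam2ne,
        ⟨lin lam1, by rw [hq0f]; ring⟩,
        ⟨C c * lin mu2, by rw [hq1f, hc, lin_smul]; ring⟩⟩
    · exact ⟨lin lam1, isHomog_lin _, lin_ne_zero hlam1ne, ⟨lin lam2, hq0f⟩,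
        ⟨C c * lin mu1, by rw [hq1f, hc, lin_smul]; ring⟩⟩
    · exact ⟨lin lam2, isHomog_lin _, lin_ne_zero hlam2ne,
        ⟨lin lam1, by rw [hq0f]; ring⟩,
        ⟨C c * lin mu1, by rw [hq1f, hc, lin_smul]; ring⟩⟩
  · right
    push_neg at hprop
    obtain ⟨hp1, hp2, hp3, hp4⟩ := hprop
    have hdet : ∀ x y : k, Matrix.det (x • S lam1 lam2 + y • S mu1 mu2) = 0 := by
      intro x y
      by_cases hxy : x = 0 ∧ y = 0
      · rw [hxy.1, hxy.2]; simp
      · obtain ⟨l, m, hlh, hmh, heq⟩ := hsing x y (by simpa [Prod.ext_iff] using hxy)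
        obtain ⟨al, hal⟩ := homog1 hlh
        obtain ⟨bm, hbm⟩ := homog1 hmh
        have hQ : ∀ p : Fin 3 → k,
            x * (dot3 lam1 p * dot3 lam2 p) + y * (dot3 mu1 p * dot3 mu2 p)
              = dot3 al p * dot3 bm p := by
          intro p
          have h' := congrArg (eval p) heq
          simpa [hq0f, hq1f, hal, hbm, smul_eval, eval_lin] using h'
        rw [extract hQ, detS]
    have hdetA : ∀ x y : k, Matrix.det (x • S lam1 lam2 + y • S mu2 mu1) = 0 := by
      intro x y; rw [Ssymm mu2 mu1]; exact hdet x y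
    have hdetB : ∀ x y : k, Matrix.det (x • S mu1 mu2 + y • S lam1 lam2) = 0 := by
      intro x y; rw [add_comm]; exact hdet y x
    have hdetC : ∀ x y : k, Matrix.det (x • S mu1 mu2 + y • S lam2 lam1) = 0 := by
      intro x y; rw [Ssymm lam2 lam1, add_comm]; exact hdet y x
    have h1 : (Matrix.of ![lam1, lam2, mu1]).det = 0 := by
      by_contra h
      rcases main h hdet with ⟨c, hc⟩ | ⟨c, hc⟩
      · exact hp3 c hc
      · exact hp4 c hc
    have h2 : (Matrix.of ![lam1, lam2, mu2]).det = 0 := by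
      by_contra h
      rcases main h hdetA with ⟨c, hc⟩ | ⟨c, hc⟩
      · exact hp1 c hc
      · exact hp2 c hc
    have h3 : (Matrix.of ![mu1, mu2, lam1]).det = 0 := by
      by_contra h
      rcases main h hdetB with ⟨c, hc⟩ | ⟨c, hc⟩
      · obtain ⟨d, hd⟩ := inv_prop hlam2ne hc; exact hp2 d hd
      · obtain ⟨d, hd⟩ := inv_prop hlam2ne hc; exact hp4 d hd
    have h4 : (Matrix.of ![mu1, mu2, lam2]).det = 0 := by
      by_contra h
      rcases main h hdetC with ⟨c, hc⟩ | ⟨c, hc⟩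
      · obtain ⟨d, hd⟩ := inv_prop hlam1ne hc; exact hp1 d hd
      · obtain ⟨d, hd⟩ := inv_prop hlam1ne hc; exact hp3 d hd
    by_cases hc12 : cross3 lam1 lam2 = 0
    · obtain ⟨c, hcc⟩ := cross3_ne_zero_aux hc12 hlam1ne
      by_cases hcm : cross3 mu1 mu2 = 0
      · obtain ⟨d, hdd⟩ := cross3_ne_zero_aux hcm hmu1ne
        by_cases hlm : cross3 lam1 mu1 = 0
        · obtain ⟨e, he⟩ := cross3_ne_zero_aux hlm hlam1ne
          exact (hp1 e he).elim
        · set a := cross3 lam1 mu1 with ha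
          have d1 : dot3 lam1 a = 0 := dot3_cross_left _ _
          have d3 : dot3 mu1 a = 0 := dot3_cross_right _ _
          have d2 : dot3 lam2 a = 0 := by rw [hcc, dot3_smul_left, d1, mul_zero]
          have d4 : dot3 mu2 a = 0 := by rw [hdd, dot3_smul_left, d3, mul_zero]
          exact ⟨a, hlm, fun i => by rw [hq0f]; exact sing_of_dots d1 d2 i,
            fun i => by rw [hq1f]; exact sing_of_dots d3 d4 i⟩
      · -- mu pair independent, lam pair dependent: use h3, h4
        obtain ⟨x, hx0, hx⟩ := rows_dep h3
        obtain ⟨y, hy0, hy⟩ := rows_dep h4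
        set a := cross3 mu1 mu2 with ha
        have d3 : dot3 mu1 a = 0 := dot3_cross_left _ _
        have d4 : dot3 mu2 a = 0 := dot3_cross_right _ _
        have hx2 : x 2 ≠ 0 := by
          intro h
          apply hcm
          have hx' : x 0 • mu1 + x 1 • mu2 = 0 := by
            have := hx; rw [h, zero_smul, add_zero] at this; exact this
          refine cross3_of_dep ?_ hx'
          rintro ⟨ha0, hb0⟩
          exact hx0 (by funext i; fin_cases i <;> simp [ha0, hb0, h])
        have hy2 : y 2 ≠ 0 := by
          intro h
          apply hcm
          have hy' : y 0 • mu1 + y 1 • mu2 = 0 := by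
            have := hy; rw [h, zero_smul, add_zero] at this; exact this
          refine cross3_of_dep ?_ hy'
          rintro ⟨ha0, hb0⟩
          exact hy0 (by funext i; fin_cases i <;> simp [ha0, hb0, h])
        have d1 : dot3 lam1 a = 0 := dot3_comb hx d3 d4 hx2
        have d2 : dot3 lam2 a = 0 := dot3_comb hy d3 d4 hy2
        exact ⟨a, hcm, fun i => by rw [hq0f]; exact sing_of_dots d1 d2 i,
          fun i => by rw [hq1f]; exact sing_of_dots d3 d4 i⟩
    · -- lam pair independent: use h1, h2
      obtain ⟨x, hx0, hx⟩ := rows_dep h1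
      obtain ⟨y, hy0, hy⟩ := rows_dep h2
      set a := cross3 lam1 lam2 with ha
      have d1 : dot3 lam1 a = 0 := dot3_cross_left _ _
      have d2 : dot3 lam2 a = 0 := dot3_cross_right _ _
      have hx2 : x 2 ≠ 0 := by
        intro h
        apply hc12
        have hx' : x 0 • lam1 + x 1 • lam2 = 0 := by
          have := hx; rw [h, zero_smul, add_zero] at this; exact this
        refine cross3_of_dep ?_ hx'
        rintro ⟨ha0, hb0⟩
        exact hx0 (by funext i; fin_cases i <;> simp [ha0, hb0, h])
      have hy2 : y 2 ≠ 0 := by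
        intro h
        apply hc12
        have hy' : y 0 • lam1 + y 1 • lam2 = 0 := by
          have := hy; rw [h, zero_smul, add_zero] at this; exact this
        refine cross3_of_dep ?_ hy'
        rintro ⟨ha0, hb0⟩
        exact hy0 (by funext i; fin_cases i <;> simp [ha0, hb0, h])
      have d3 : dot3 mu1 a = 0 := dot3_comb hx d1 d2 hx2
      have d4 : dot3 mu2 a = 0 := dot3_comb hy d1 d2 hy2
      exact ⟨a, hc12, fun i => by rw [hq0f]; exact sing_of_dots d1 d2 i,
        fun i => by rw [hq1f]; exact sing_of_dots d3 d4 i⟩
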